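/- Let q - 1 = ds, ξ a primitive element of F_q, ω = ξ^s, a_0, ..., a_{d-1} ∈ F_q^*, r_0, ..., r_{d-1} positive integers. Define f : F_q → F_q by f(0) = 0 and f(x) = a_i x^{r_i} for x ∈ D_i = ξ^i D_0 (D_0 the s-th roots of unity). Then f is a bijection of F_q if and only if gcd(r_0 r_1 ⋯ r_{d-1}, s) = 1 and the elements a_i^s ω^{i r_i}, 0 ≤ i ≤ d-1, are pairwise distinct. -/

import Mathlib

theorem cyclotomic_mapping_pp_criterion
    (F : Type*) [Field F] [Fintype F] (q d s : ℕ)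
    (hq : Fintype.card F = q)
    (hd : 0 < d) (hs : 0 < s) (hds : q - 1 = d * s)
    (ξ : Fˣ) (hξ : ∀ u : Fˣ, ∃ n : ℕ, ξ ^ n = u)
    (ω : F) (hω : ω = (ξ : F) ^ s)
    (D : Fin d → Set F)
    (hD : ∀ i, D i = {x : F | ∃ k < s, x = (ξ : F) ^ (k * d + (i : ℕ))})
    (a : Fin d → F) (ha : ∀ i, a i ≠ 0)
    (r : Fin d → ℕ) (hr : ∀ i, 0 < r i)
    (f : F → F) (hf0 : f 0 = 0)
    (hf : ∀ i, ∀ x ∈ D i, f x = a i * x ^ r i) :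
    Function.Bijective f ↔
      Nat.gcd (∏ i, r i) s = 1 ∧
      Function.Injective (fun i : Fin d => a i ^ s * ω ^ ((i : ℕ) * r i)) := by
  classical
  have hds0 : 0 < d * s := Nat.mul_pos hd hs
  -- order of ξ
  have hord : orderOf ξ = d * s := by
    have h1 : orderOf ξ = Nat.card Fˣ :=
      orderOf_eq_card_of_forall_mem_zpowers (fun u => by
        obtain ⟨n, hn⟩ := hξ u
        exact ⟨(n : ℤ), by simpa using hn⟩)
    rw [h1, Nat.card_eq_fintype_card, Fintype.card_units, hq, hds]
  have hpow : ∀ m n : ℕ, ((ξ : F) ^ m = (ξ : F) ^ n) ↔ m ≡ n [MOD d * s] := by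
    intro m n
    rw [← Units.val_pow_eq_pow_val, ← Units.val_pow_eq_pow_val, ← Units.ext_iff,
      pow_eq_pow_iff_modEq, hord]
  -- logs of a i
  have hau : ∀ i, ∃ n : ℕ, (ξ : F) ^ n = a i := by
    intro i
    obtain ⟨n, hn⟩ := hξ (Ne.isUnit (ha i)).unit
    exact ⟨n, by rw [← Units.val_pow_eq_pow_val, hn, IsUnit.unit_spec]⟩
  choose b hb using hau
  set N : Fin d → ℕ → ℕ := fun i k => b i + (k * d + (i : ℕ)) * r i with hN
  set c : Fin d → ℕ := fun i => b i + (i : ℕ) * r i with hc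
  have hNc : ∀ i k, N i k = c i + k * (d * r i) := by intro i k; simp [hN, hc]; ring
  -- membership and covering
  have hmem : ∀ (i : Fin d) (k : ℕ), k < s → (ξ : F) ^ (k * d + (i : ℕ)) ∈ D i := by
    intro i k hk
    rw [hD]
    exact ⟨k, hk, rfl⟩
  have hcover : ∀ x : F, x ≠ 0 → ∃ (i : Fin d) (k : ℕ), k < s ∧ x = (ξ : F) ^ (k * d + (i : ℕ)) := by
    intro x hx
    obtain ⟨n, hn⟩ := hξ (Ne.isUnit hx).unit
    have hxn : x = (ξ : F) ^ n := by rw [← Units.val_pow_eq_pow_val, hn, IsUnit.unit_spec]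
    have h1 : (ξ : F) ^ n = (ξ : F) ^ (n % (d * s)) :=
      (hpow n (n % (d * s))).mpr (Nat.mod_modEq n (d * s)).symm
    have hlt : n % (d * s) < d * s := Nat.mod_lt _ hds0
    refine ⟨⟨n % (d * s) % d, Nat.mod_lt _ hd⟩, n % (d * s) / d, ?_, ?_⟩
    · exact Nat.div_lt_of_lt_mul hlt
    · rw [hxn, h1]
      congr 1
      exact (Nat.div_add_mod' (n % (d * s)) d).symm
  -- value of f on powers
  have hfval : ∀ (i : Fin d) (k : ℕ), k < s →
      f ((ξ : F) ^ (k * d + (i : ℕ))) = (ξ : F) ^ (N i k) := by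
    intro i k hk
    rw [hf i _ (hmem i k hk), ← hb i, ← pow_mul, ← pow_add]
  have hξ0 : (ξ : F) ≠ 0 := Units.ne_zero ξ
  -- injectivity of f in terms of congruences
  have hinj_iff : Function.Injective f ↔
      ∀ (i j : Fin d) (k l : ℕ), k < s → l < s → N i k ≡ N j l [MOD d * s] → i = j ∧ k = l := by
    constructor
    · intro hinj i j k l hk hl hcong
      have h1 : f ((ξ : F) ^ (k * d + (i : ℕ))) = f ((ξ : F) ^ (l * d + (j : ℕ))) := by
        rw [hfval i k hk, hfval j l hl]
        exact (hpow _ _).mpr hcong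
      have h2 := hinj h1
      have h3 : k * d + (i : ℕ) ≡ l * d + (j : ℕ) [MOD d * s] := (hpow _ _).mp h2
      have h4 : k * d + (i : ℕ) < d * s := by
        have h' : (k + 1) * d ≤ s * d := Nat.mul_le_mul_right d hk
        have he : (k + 1) * d = k * d + d := by ring
        have hcm : d * s = s * d := Nat.mul_comm d s
        have hi : (i : ℕ) < d := i.isLt
        omega
      have h5 : l * d + (j : ℕ) < d * s := by
        have h' : (l + 1) * d ≤ s * d := Nat.mul_le_mul_right d hl
        have he : (l + 1) * d = l * d + d := by ring
        have hcm : d * s = s * d := Nat.mul_comm d s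
        have hj : (j : ℕ) < d := j.isLt
        omega
      have h6 : k * d + (i : ℕ) = l * d + (j : ℕ) := by
        have := h3
        unfold Nat.ModEq at this
        rwa [Nat.mod_eq_of_lt h4, Nat.mod_eq_of_lt h5] at this
      have hi : (i : ℕ) < d := i.isLt
      have hj : (j : ℕ) < d := j.isLt
      have hij : (i : ℕ) = (j : ℕ) := by
        have e1 : (k * d + (i : ℕ)) % d = (i : ℕ) := by
          rw [add_comm, Nat.add_mul_mod_self_right, Nat.mod_eq_of_lt hi]
        have e2 : (l * d + (j : ℕ)) % d = (j : ℕ) := by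
          rw [add_comm, Nat.add_mul_mod_self_right, Nat.mod_eq_of_lt hj]
        rw [← e1, ← e2, h6]
      refine ⟨Fin.ext hij, ?_⟩
      have hkl : k * d = l * d := by omega
      exact Nat.eq_of_mul_eq_mul_right hd hkl
    · intro P x y hxy
      by_cases hx : x = 0
      · by_cases hy : y = 0
        · rw [hx, hy]
        · exfalso
          obtain ⟨j, l, hl, hy'⟩ := hcover y hy
          have : f y = (ξ : F) ^ (N j l) := by rw [hy']; exact hfval j l hl
          rw [← hxy, hx, hf0] at this
          exact pow_ne_zero _ hξ0 this.symm
      · by_cases hy : y = 0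
        · exfalso
          obtain ⟨i, k, hk, hx'⟩ := hcover x hx
          have : f x = (ξ : F) ^ (N i k) := by rw [hx']; exact hfval i k hk
          rw [hxy, hy, hf0] at this
          exact pow_ne_zero _ hξ0 this.symm
        · obtain ⟨i, k, hk, hx'⟩ := hcover x hx
          obtain ⟨j, l, hl, hy'⟩ := hcover y hy
          have h1 : (ξ : F) ^ (N i k) = (ξ : F) ^ (N j l) := by
            rw [← hfval i k hk, ← hfval j l hl, ← hx', ← hy', hxy]
          obtain ⟨hij, hkl⟩ := P i j k l hk hl ((hpow _ _).mp h1)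
          rw [hx', hy', hij, hkl]
  -- condition 1
  have hcond1 : (Nat.gcd (∏ i, r i) s = 1) ↔ ∀ i, Nat.gcd (r i) s = 1 := by
    constructor
    · intro h i
      exact Nat.Coprime.coprime_dvd_left (Finset.dvd_prod_of_mem _ (Finset.mem_univ i)) h
    · intro h
      exact Nat.Coprime.prod_left (fun i _ => h i)
  -- condition 2
  have homega : ∀ i : Fin d, a i ^ s * ω ^ ((i : ℕ) * r i) = (ξ : F) ^ (s * c i) := by
    intro i
    rw [hω, ← hb i, ← pow_mul, ← pow_mul, ← pow_add]
    congr 1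
    simp [hc]
    ring
  have hcond2 : Function.Injective (fun i : Fin d => a i ^ s * ω ^ ((i : ℕ) * r i)) ↔
      ∀ i j : Fin d, c i ≡ c j [MOD d] → i = j := by
    constructor
    · intro h i j hcc
      apply h
      simp only [homega]
      rw [hpow]
      have := Nat.ModEq.mul_left' s hcc
      rwa [mul_comm s d] at this
    · intro h i j hij
      simp only [homega] at hij
      have h1 := (hpow _ _).mp hij
      rw [mul_comm d s] at h1
      exact h i j (Nat.ModEq.mul_left_cancel' hs.ne' h1)
  -- main combinatorial equivalence
  have main : (∀ (i j : Fin d) (k l : ℕ), k < s → l < s → N i k ≡ N j l [MOD d * s] → i = j ∧ k = l)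
      ↔ ((∀ i, Nat.gcd (r i) s = 1) ∧ ∀ i j : Fin d, c i ≡ c j [MOD d] → i = j) := by
    constructor
    · intro P
      have hg : ∀ i, Nat.gcd (r i) s = 1 := by
        intro i
        by_contra hne
        set g := Nat.gcd (r i) s with hgdef
        have hg0 : 0 < g := Nat.gcd_pos_of_pos_right _ hs
        have hg2 : 2 ≤ g := by omega
        have hgs : g ∣ s := Nat.gcd_dvd_right _ _
        have hgr : g ∣ r i := Nat.gcd_dvd_left _ _
        set k := s / g with hkdef
        have hk0 : 0 < k := Nat.div_pos (Nat.le_of_dvd hs hgs) hg0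
        have hks : k < s := Nat.div_lt_self hs hg2
        have hdvd : d * s ∣ k * (d * r i) := by
          obtain ⟨t, ht⟩ := hgr
          refine ⟨t, ?_⟩
          have hsg : k * g = s := Nat.div_mul_cancel hgs
          calc k * (d * r i) = k * (d * (g * t)) := by rw [← ht]
            _ = d * (k * g) * t := by ring
            _ = d * s * t := by rw [hsg]
        have hcong : N i k ≡ N i 0 [MOD d * s] := by
          rw [hNc, hNc]
          simp only [Nat.zero_mul, Nat.add_zero]
          exact Nat.ModEq.add_left (c i) (Nat.modEq_zero_iff_dvd.mpr hdvd)
        obtain ⟨-, hk⟩ := P i i k 0 hks hs hcong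
        omega
      refine ⟨hg, ?_⟩
      have key : ∀ i j : Fin d, c i ≤ c j → c i ≡ c j [MOD d] → i = j := by
        intro i j hle hcc
        obtain ⟨m, hm⟩ : ∃ m, c j = c i + d * m := by
          obtain ⟨m, hm⟩ := (Nat.modEq_iff_dvd' hle).mp hcc
          exact ⟨m, by omega⟩
        obtain ⟨u, hu⟩ : ∃ u, r i * u ≡ 1 [MOD s] := by
          rcases eq_or_lt_of_le (show 1 ≤ s from hs) with h1 | h1
          · exact ⟨1, by rw [← h1]; exact Nat.modEq_one⟩
          · obtain ⟨u, -, hu⟩ := Nat.exists_mul_mod_eq_one_of_coprime (hg i) h1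
            refine ⟨u, ?_⟩
            unfold Nat.ModEq
            rw [hu, Nat.mod_eq_of_lt h1]
        set k := (m * u) % s with hkdef
        have hks : k < s := Nat.mod_lt _ hs
        have h5 : k * r i ≡ m [MOD s] := by
          calc k * r i ≡ (m * u) * r i [MOD s] :=
                Nat.ModEq.mul_right _ (Nat.mod_modEq _ _)
            _ = m * (r i * u) := by ring
            _ ≡ m * 1 [MOD s] := Nat.ModEq.mul_left _ hu
            _ = m := by ring
        have h6 : d * (k * r i) ≡ d * m [MOD d * s] := Nat.ModEq.mul_left' d h5
        have hcong : N i k ≡ N j 0 [MOD d * s] := by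
          rw [hNc, hNc, hm]
          simp only [Nat.zero_mul, Nat.add_zero]
          have : c i + k * (d * r i) = c i + d * (k * r i) := by ring
          rw [this]
          exact Nat.ModEq.add_left (c i) h6
        exact (P i j k 0 hks hs hcong).1
      intro i j hcc
      rcases le_total (c i) (c j) with h | h
      · exact key i j h hcc
      · exact (key j i h hcc.symm).symm
    · rintro ⟨hg, hcc⟩ i j k l hk hl hcong
      have hdd : d ∣ d * s := ⟨s, rfl⟩
      have h1 : c i ≡ c j [MOD d] := by
        have h2 : N i k ≡ N j l [MOD d] := Nat.ModEq.of_dvd hdd hcong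
        have e1 : N i k ≡ c i [MOD d] := by
          rw [hNc]
          have : d ∣ k * (d * r i) := ⟨k * r i, by ring⟩
          calc c i + k * (d * r i) ≡ c i + 0 [MOD d] :=
                Nat.ModEq.add_left _ (Nat.modEq_zero_iff_dvd.mpr this)
            _ = c i := by ring
        have e2 : N j l ≡ c j [MOD d] := by
          rw [hNc]
          have : d ∣ l * (d * r j) := ⟨l * r j, by ring⟩
          calc c j + l * (d * r j) ≡ c j + 0 [MOD d] :=
                Nat.ModEq.add_left _ (Nat.modEq_zero_iff_dvd.mpr this)
            _ = c j := by ring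
        exact (e1.symm.trans h2).trans e2
      have hij := hcc i j h1
      subst hij
      refine ⟨rfl, ?_⟩
      have h2 : k * (d * r i) ≡ l * (d * r i) [MOD d * s] := by
        rw [hNc, hNc] at hcong
        exact Nat.ModEq.add_left_cancel' _ hcong
      have h3 : d * (k * r i) ≡ d * (l * r i) [MOD d * s] := by
        have e : ∀ t : ℕ, t * (d * r i) = d * (t * r i) := by intro t; ring
        rwa [e k, e l] at h2
      have h4 : k * r i ≡ l * r i [MOD s] := Nat.ModEq.mul_left_cancel' hd.ne' h3
      have h5 : k ≡ l [MOD s] :=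
        Nat.ModEq.cancel_right_of_coprime (by rw [Nat.gcd_comm]; exact hg i) h4
      unfold Nat.ModEq at h5
      rw [Nat.mod_eq_of_lt hk, Nat.mod_eq_of_lt hl] at h5
      exact h5
  rw [← Finite.injective_iff_bijective, hinj_iff, main, hcond1, hcond2]
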